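/- Let e_1, …, e_{2g+1} be pairwise distinct complex numbers, let f(x) = 4∏_{k=1}^{2g+1}(x−e_k) = 4x^{2g+1} + λ_{2g}x^{2g} + … + λ_0, and let F be the Kleinian 2-polar of these coefficients. Then for any i ≠ j, F(e_i,e_j)/(4(e_i−e_j)²) = Σ_{n=0}^{g−1} (e_i e_j)^n S^{(ij)}_{2g−2n−1}, where S^{(ij)}_k denotes the elementary symmetric polynomial of degree k in the 2g−1 numbers {e_1,…,e_{2g+1}} \ {e_i, e_j}. -/

import Mathlib

open Finset Polynomial

/-- Elementary symmetric function of degree `n` of the values of `f` on `s`. -/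
noncomputable def esymm {ι : Type*} [DecidableEq ι] (s : Finset ι) (n : ℕ) (f : ι → ℂ) : ℂ :=
  ∑ t ∈ Finset.powersetCard n s, ∏ i ∈ t, f i

lemma key_sum (u v : ℂ) (c : ℕ → ℂ) : ∀ N : ℕ,
    (∑ m ∈ Finset.range N, u^(m+1) *
      (2 * (4 * (c (2*m) - v * c (2*m+1) + u * c (2*m+2)))
        + (4 * (c (2*m+1) - v * c (2*m+2) + u * c (2*m+3))) * v))
    + (2 * (4 * (u * c 0)) + (4 * (- v * c 0 + u * c 1)) * v)
    = 4*(4*u - v^2) * (∑ n ∈ Finset.range N, u^n * c (2*n))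
      + (8*u - 4*v^2) * u^N * c (2*N) + 4*v*u^(N+1)*c (2*N+1) := by
  intro N
  induction N with
  | zero => simp; ring
  | succ N ih =>
    rw [Finset.sum_range_succ, Finset.sum_range_succ]
    have e1 : 2*(N+1) = 2*N+2 := by ring
    have e2 : 2*N+2+1 = 2*N+3 := by omega
    rw [e1, e2]
    linear_combination ih

theorem stmt_2 (g : ℕ) (hg : 1 ≤ g) (e : Fin (2*g+1) → ℂ) (he : Function.Injective e)
    (lam : ℕ → ℂ)
    (hlam : ∀ k, lam k = (4 * ∏ m, (X - C (e m)) : Polynomial ℂ).coeff k)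
    (F : ℂ → ℂ → ℂ)
    (hF : ∀ x z, F x z = ∑ k ∈ range (g+1), x^k * z^k * (2 * lam (2*k) + lam (2*k+1) * (z + x)))
    (i j : Fin (2*g+1)) (hij : i ≠ j) :
    F (e i) (e j) / (4 * (e i - e j)^2)
      = ∑ n ∈ range g, (e i * e j)^n * esymm ((Finset.univ.erase i).erase j) (2*g - 2*n - 1) e := by
  set a := e i with ha
  set b := e j with hb
  set s : Finset (Fin (2*g+1)) := (Finset.univ.erase i).erase j with hs
  set P : Polynomial ℂ := ∏ m ∈ s, (X - C (e m)) with hP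
  have hjmem : j ∈ Finset.univ.erase i := Finset.mem_erase.2 ⟨hij.symm, Finset.mem_univ j⟩
  have hsplit : (∏ m, (X - C (e m)) : Polynomial ℂ) = (X - C a) * ((X - C b) * P) := by
    rw [← Finset.mul_prod_erase Finset.univ _ (Finset.mem_univ i),
        ← Finset.mul_prod_erase _ _ hjmem]
  have hcard : s.card = 2*g - 1 := by
    rw [hs, Finset.card_erase_of_mem hjmem, Finset.card_erase_of_mem (Finset.mem_univ i),
        Finset.card_univ, Fintype.card_fin]
    omega
  set c : ℕ → ℂ := fun k => P.coeff k with hc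
  -- formula for the coefficients
  have h4 : (4 : Polynomial ℂ) = C 4 := (map_ofNat C 4).symm
  have hco : ∀ k, lam k =
      4 * ((if 2 ≤ k then c (k-2) else 0) - (a+b) * (if 1 ≤ k then c (k-1) else 0) + a*b*c k) := by
    intro k
    have hexp : (4 * ((X - C a) * ((X - C b) * P)) : Polynomial ℂ)
        = C 4 * (P * X^2) - C (4*(a+b)) * (P * X^1) + C (4*(a*b)) * P := by
      simp only [map_mul, map_add, h4]; ring
    rw [hlam k, hsplit, hexp]
    simp only [coeff_add, coeff_sub, coeff_C_mul, coeff_mul_X_pow', hc]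
    split_ifs with h1 h2 h2 <;> push_cast <;> ring_nf <;> omega
  -- degree bounds
  have hdeg : P.natDegree = 2*g - 1 := by
    rw [hP, Polynomial.natDegree_prod _ _ (fun m _ => X_sub_C_ne_zero (e m))]
    simp [natDegree_X_sub_C, hcard]
  have hc2g : c (2*g) = 0 := by
    simp only [hc]
    exact coeff_eq_zero_of_natDegree_lt (by rw [hdeg]; omega)
  have hc2g1 : c (2*g+1) = 0 := by
    simp only [hc]
    exact coeff_eq_zero_of_natDegree_lt (by rw [hdeg]; omega)
  -- the esymm values
  have hesymm : ∀ n ∈ Finset.range g, esymm s (2*g - 2*n - 1) e = - c (2*n) := by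
    intro n hn
    rw [Finset.mem_range] at hn
    have h1 : Multiset.card (s.val.map e) = 2*g-1 := by
      rw [Multiset.card_map, ← Finset.card_def, hcard]
    have h2 := Multiset.prod_X_sub_C_coeff (s.val.map e) (k := 2*n) (by rw [h1]; omega)
    rw [h1] at h2
    have hPeq : ((s.val.map e).map fun t => X - C t).prod = P := by
      rw [hP, Finset.prod, Multiset.map_map]; rfl
    rw [hPeq] at h2
    rw [show 2*g-1-2*n = 2*g-2*n-1 from by omega] at h2
    have hodd : ((-1:ℂ))^(2*g-2*n-1) = -1 := Odd.neg_one_pow ⟨g-n-1, by omega⟩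
    simp only [esymm, hc]
    rw [← Finset.esymm_map_val, h2, hodd]
    ring
  -- lam at specific indices
  have l1 : ∀ m : ℕ, lam (2*m+2) = 4 * (c (2*m) - (a+b) * c (2*m+1) + a*b * c (2*m+2)) := by
    intro m
    rw [hco (2*m+2), if_pos (show 2 ≤ 2*m+2 by omega), if_pos (show 1 ≤ 2*m+2 by omega)]
    simp only [show 2*m+2-2 = 2*m from by omega, show 2*m+2-1 = 2*m+1 from by omega]
  have l2 : ∀ m : ℕ, lam (2*m+3) = 4 * (c (2*m+1) - (a+b) * c (2*m+2) + a*b * c (2*m+3)) := by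
    intro m
    rw [hco (2*m+3), if_pos (show 2 ≤ 2*m+3 by omega), if_pos (show 1 ≤ 2*m+3 by omega)]
    simp only [show 2*m+3-2 = 2*m+1 from by omega, show 2*m+3-1 = 2*m+2 from by omega]
  have l0 : lam 0 = 4 * (a*b*c 0) := by rw [hco 0]; norm_num
  have l0' : lam 1 = 4 * (- (a+b)*c 0 + a*b*c 1) := by
    rw [hco 1]; norm_num; ring
  -- main computation
  have hab : a ≠ b := fun h => hij (he h)
  have hD : (4 * (a-b)^2 : ℂ) ≠ 0 :=
    mul_ne_zero (by norm_num) (pow_ne_zero _ (sub_ne_zero.2 hab))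
  rw [div_eq_iff hD, hF, Finset.sum_range_succ']
  have hsum1 : (∑ m ∈ Finset.range g,
        a^(m+1) * b^(m+1) * (2 * lam (2*(m+1)) + lam (2*(m+1)+1) * (b + a)))
      = ∑ m ∈ Finset.range g, (a*b)^(m+1) *
          (2 * (4 * (c (2*m) - (a+b) * c (2*m+1) + (a*b) * c (2*m+2)))
            + (4 * (c (2*m+1) - (a+b) * c (2*m+2) + (a*b) * c (2*m+3))) * (a+b)) := by
    refine Finset.sum_congr rfl fun m _ => ?_
    rw [show 2*(m+1)+1 = 2*m+3 from by omega, show 2*(m+1) = 2*m+2 from by omega,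
        l1 m, l2 m, mul_pow]
    ring
  have hsum2 : (∑ n ∈ range g, (a * b)^n * esymm s (2*g - 2*n - 1) e)
      = -(∑ n ∈ Finset.range g, (a*b)^n * c (2*n)) := by
    rw [← Finset.sum_neg_distrib]
    refine Finset.sum_congr rfl fun n hn => ?_
    rw [hesymm n hn]; ring
  rw [hsum1, hsum2]
  have K := key_sum (a*b) (a+b) c g
  rw [hc2g, hc2g1] at K
  rw [show 2*0 = 0 from rfl, show 2*0+1 = 1 from rfl, l0, l0']
  linear_combination K
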